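/- Let D be a Dedekind domain. Then the set of isomorphism classes of semidualizing D-modules coincides with the divisor class group: Pic(D) = Cl(D) = 𝔖₀(D). In particular, if Pic(D) is nontrivial, then D admits a non-free semidualizing module, while for every maximal ideal m of D the localization D_m admits only the free semidualizing module. -/

import Mathlib

/-!
STATEMENT 7: Over a Dedekind domain `D`, semidualizing = invertible = rank-1 reflexive
(`Pic(D) = Cl(D) = 𝔖₀(D)`); consequently, if `Pic(D)` is nontrivial then `D` has a
non-free semidualizing module, while every localization `D_m` at a maximal ideal has only
the free semidualizing module.
-/

open TensorProduct CategoryTheory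
open scoped nonZeroDivisors
universe u

noncomputable def ExtMod (R : Type u) [CommRing R] (M N : Type u) [AddCommGroup M]
    [AddCommGroup N] [Module R M] [Module R N] (i : ℕ) : Type u :=
  ((Ext R (ModuleCat R) i).obj (Opposite.op (ModuleCat.of R M))).obj (ModuleCat.of R N)

def IsSemidualizing (R : Type u) [CommRing R] (C : Type u) [AddCommGroup C]
    [Module R C] : Prop :=
  Module.Finite R C ∧ Function.Bijective (LinearMap.lsmul R C) ∧
    ∀ i : ℕ, 1 ≤ i → Subsingleton (ExtMod R C C i)

def IsInvertibleModule (R : Type u) [CommRing R] (a : Type u) [AddCommGroup a]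
    [Module R a] : Prop :=
  Module.Finite R a ∧
    ∃ (b : Type u) (_ : AddCommGroup b) (_ : Module R b),
      Module.Finite R b ∧ Nonempty ((a ⊗[R] b) ≃ₗ[R] R)

/-! ### Generic helpers -/

section Generic

variable {R : Type u} [CommRing R]

/-- Ext groups vanish in positive degrees against a projective first argument. -/
lemma aux_subsingleton_ext (C : Type u) [AddCommGroup C] [Module R C]
    [Module.Projective R C] (i : ℕ) (hi : 1 ≤ i) : Subsingleton (ExtMod R C C i) := by
  obtain ⟨n, rfl⟩ : ∃ n, i = n + 1 := ⟨i - 1, (Nat.succ_pred_eq_of_pos hi).symm⟩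
  haveI : Projective (ModuleCat.of R C) :=
    (IsProjective.iff_projective C).mp ‹Module.Projective R C›
  have hz := isZero_Ext_succ_of_projective (R := R) (C := ModuleCat R)
      (ModuleCat.of R C) (ModuleCat.of R C) n
  suffices h : Subsingleton
      (((Ext R (ModuleCat R) (n + 1)).obj (Opposite.op (ModuleCat.of R C))).obj
        (ModuleCat.of R C)) by exact h
  set X := ((Ext R (ModuleCat R) (n + 1)).obj (Opposite.op (ModuleCat.of R C))).obj
    (ModuleCat.of R C) with hX
  have h0 : (𝟙 X : X ⟶ X) = 0 := hz.eq_of_src _ _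
  refine ⟨fun x y => ?_⟩
  have hx : ∀ z : X, z = 0 := by
    intro z
    have : (𝟙 X : X ⟶ X) z = (0 : X ⟶ X) z := by rw [h0]
    simpa using this
  rw [hx x, hx y]

/-- Bijectivity of the homothety map transfers along linear equivalences. -/
lemma aux_lsmul_congr {N N' : Type*} [AddCommGroup N] [Module R N] [AddCommGroup N']
    [Module R N'] (e : N ≃ₗ[R] N') (h : Function.Bijective (LinearMap.lsmul R N')) :
    Function.Bijective (LinearMap.lsmul R N) := by
  constructor
  · intro a b hab
    apply h.injective
    ext z
    simp only [LinearMap.lsmul_apply]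
    calc a • z = e (a • e.symm z) := by simp
      _ = e ((LinearMap.lsmul R N a) (e.symm z)) := rfl
      _ = e ((LinearMap.lsmul R N b) (e.symm z)) := by rw [hab]
      _ = b • z := by simp
  · intro φ
    obtain ⟨d, hd⟩ := h.surjective (e.toLinearMap ∘ₗ φ ∘ₗ e.symm.toLinearMap)
    refine ⟨d, ?_⟩
    ext x
    have := congrArg (fun ψ => e.symm (ψ (e x))) hd
    simpa using this

/-- A linear equivalence between modules over a localization which is linear over the base
ring is automatically linear over the localization. -/
noncomputable def aux_extendEquiv (S : Submonoid R) (A : Type*) [CommRing A] [Algebra R A]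
    [IsLocalization S A] {M N : Type*} [AddCommGroup M] [AddCommGroup N] [Module R M]
    [Module R N] [Module A M] [Module A N] [IsScalarTower R A M] [IsScalarTower R A N]
    (e : M ≃ₗ[R] N) : M ≃ₗ[A] N :=
  LinearEquiv.ofLinear (e.toLinearMap.extendScalarsOfIsLocalization S A)
    (e.symm.toLinearMap.extendScalarsOfIsLocalization S A)
    (by ext x; simp) (by ext x; simp)

end Generic
/-! ### Dedekind domain theory -/

section Dedekind

variable {R : Type u} [CommRing R] [IsDomain R] [IsDedekindDomain R]

local notation "K" => FractionRing R

lemma aux_exists_sum {I J : FractionalIdeal R⁰ K} (h : I * J = 1) :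
    ∃ (n : ℕ) (a : Fin n → ↥(I : Submodule R K)) (c : Fin n → ↥(J : Submodule R K)),
      ∑ i, ((a i : K) * (c i : K)) = 1 := by
  have h1 : (1 : K) ∈ (I : Submodule R K) * (J : Submodule R K) := by
    rw [← FractionalIdeal.coe_mul, h]
    exact FractionalIdeal.mem_coe.mpr ((FractionalIdeal.mem_one_iff _).mpr ⟨1, map_one _⟩)
  refine Submodule.mul_induction_on h1 ?_ ?_
  · intro m hm n hn
    exact ⟨1, fun _ => ⟨m, hm⟩, fun _ => ⟨n, hn⟩, by simp⟩
  · rintro x y ⟨n₁, a₁, c₁, hx⟩ ⟨n₂, a₂, c₂, hy⟩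
    refine ⟨n₁ + n₂, Fin.addCases a₁ a₂, Fin.addCases c₁ c₂, ?_⟩
    rw [Fin.sum_univ_add]
    simp only [Fin.addCases_left, Fin.addCases_right, hx, hy]

set_option maxHeartbeats 1000000 in
/-- The key consequences of invertibility (`I * J = 1`) of a fractional ideal over a
Dedekind domain: `I ⊗ J ≃ R`, `I` is projective, and homotheties `R → End I` are bijective. -/
lemma aux_main {I J : FractionalIdeal R⁰ K} (h : I * J = 1) :
    Nonempty ((↥(I : Submodule R K) ⊗[R] ↥(J : Submodule R K)) ≃ₗ[R] R) ∧
      Module.Projective R ↥(I : Submodule R K) ∧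
      Function.Bijective (LinearMap.lsmul R ↥(I : Submodule R K)) := by
  obtain ⟨n, a, c, hsum⟩ := aux_exists_sum h
  have halg : Function.Injective (algebraMap R K) := IsFractionRing.injective R K
  have halgL : Function.Injective (Algebra.linearMap R K) := halg
  set ρ : R ≃ₗ[R] LinearMap.range (Algebra.linearMap R K) :=
    LinearEquiv.ofInjective (Algebra.linearMap R K) halgL with hρ
  have hρval : ∀ d : R, ((ρ d : ↥(LinearMap.range (Algebra.linearMap R K))) : K)
      = algebraMap R K d := fun d => rfl
  have hmemIJ : ∀ (x : ↥(I : Submodule R K)) (y : ↥(J : Submodule R K)),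
      (x : K) * (y : K) ∈ LinearMap.range (Algebra.linearMap R K) := by
    intro x y
    have h1 : (x : K) * (y : K) ∈ ((I * J : FractionalIdeal R⁰ K) : Submodule R K) := by
      rw [FractionalIdeal.coe_mul]
      exact Submodule.mul_mem_mul x.2 y.2
    rw [h] at h1
    obtain ⟨d, hd⟩ := (FractionalIdeal.mem_one_iff _).mp (FractionalIdeal.mem_coe.mp h1)
    exact ⟨d, hd⟩
  have hmemJI : ∀ (y : ↥(J : Submodule R K)) (x : ↥(I : Submodule R K)),
      ∃ d : R, algebraMap R K d = (y : K) * (x : K) := by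
    intro y x
    obtain ⟨d, hd⟩ := hmemIJ x y
    exact ⟨d, by rw [mul_comm]; exact hd⟩
  -- the multiplication bilinear map
  set mulLin : ↥(I : Submodule R K) →ₗ[R] ↥(J : Submodule R K) →ₗ[R] K :=
    LinearMap.mk₂ R (fun x y => (x : K) * (y : K))
      (fun m₁ m₂ n => by push_cast; ring)
      (fun r m n => by push_cast [Submodule.coe_smul]; rw [smul_mul_assoc])
      (fun m n₁ n₂ => by push_cast; ring)
      (fun r m n => by push_cast [Submodule.coe_smul]; rw [mul_smul_comm]) with hmulLin
  set μ₀ : (↥(I : Submodule R K) ⊗[R] ↥(J : Submodule R K)) →ₗ[R] K :=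
    TensorProduct.lift mulLin with hμ₀
  have hμ₀tmul : ∀ (x : ↥(I : Submodule R K)) (y : ↥(J : Submodule R K)),
      μ₀ (x ⊗ₜ[R] y) = (x : K) * (y : K) := fun x y => rfl
  have hmem : ∀ t, μ₀ t ∈ LinearMap.range (Algebra.linearMap R K) := by
    intro t
    induction t with
    | zero => simpa using Submodule.zero_mem _
    | tmul x y => rw [hμ₀tmul]; exact hmemIJ x y
    | add s t hs ht => rw [map_add]; exact Submodule.add_mem _ hs ht
  set μ : (↥(I : Submodule R K) ⊗[R] ↥(J : Submodule R K)) →ₗ[R] R :=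
    ρ.symm.toLinearMap ∘ₗ μ₀.codRestrict _ hmem with hμdef
  have hμ : ∀ t, algebraMap R K (μ t) = μ₀ t := by
    intro t
    have h1 : ρ (μ t) = ⟨μ₀ t, hmem t⟩ := by
      show ρ (ρ.symm _) = _
      rw [ρ.apply_symm_apply]
      rfl
    have := congrArg Subtype.val h1
    rwa [hρval] at this
  set t₀ : ↥(I : Submodule R K) ⊗[R] ↥(J : Submodule R K) := ∑ i, (a i) ⊗ₜ[R] (c i) with ht₀
  have hμt₀ : μ t₀ = 1 := by
    apply halg
    rw [hμ, map_one, ht₀, map_sum]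
    simp only [hμ₀tmul]
    exact hsum
  set ν : R →ₗ[R] (↥(I : Submodule R K) ⊗[R] ↥(J : Submodule R K)) :=
    LinearMap.toSpanSingleton R _ t₀ with hν
  have hEquiv : Nonempty ((↥(I : Submodule R K) ⊗[R] ↥(J : Submodule R K)) ≃ₗ[R] R) := by
    refine ⟨LinearEquiv.ofLinear μ ν ?_ ?_⟩
    · apply LinearMap.ext_ring
      simp [hν, LinearMap.toSpanSingleton_apply, hμt₀]
    · apply TensorProduct.ext'
      intro x y
      have hxy : algebraMap R K (μ (x ⊗ₜ[R] y)) = (x : K) * (y : K) := by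
        rw [hμ, hμ₀tmul]
      choose d hd using fun i => hmemJI y (a i)
      have claim1 : ∀ i, μ (x ⊗ₜ[R] y) • a i = d i • x := by
        intro i
        apply Subtype.ext
        calc ((μ (x ⊗ₜ[R] y) • a i : ↥(I : Submodule R K)) : K)
            = algebraMap R K (μ (x ⊗ₜ[R] y)) * (a i : K) := by
              rw [Submodule.coe_smul, Algebra.smul_def]
          _ = ((x : K) * (y : K)) * (a i : K) := by rw [hxy]
          _ = (x : K) * ((y : K) * (a i : K)) := by ring
          _ = (x : K) * algebraMap R K (d i) := by rw [hd i]
          _ = ((d i • x : ↥(I : Submodule R K)) : K) := by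
              rw [Submodule.coe_smul, Algebra.smul_def]; ring
      calc (ν ∘ₗ μ) (x ⊗ₜ[R] y) = μ (x ⊗ₜ[R] y) • ∑ i, (a i) ⊗ₜ[R] (c i) := rfl
        _ = ∑ i, (μ (x ⊗ₜ[R] y) • a i) ⊗ₜ[R] (c i) := by
            rw [Finset.smul_sum]
            exact Finset.sum_congr rfl fun i _ => TensorProduct.smul_tmul' _ _ _
        _ = ∑ i, x ⊗ₜ[R] ((d i) • c i) := by
            refine Finset.sum_congr rfl fun i _ => ?_
            rw [claim1 i, TensorProduct.smul_tmul]
        _ = x ⊗ₜ[R] (∑ i, (d i) • c i) := by rw [TensorProduct.tmul_sum]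
        _ = (LinearMap.id : _ →ₗ[R] _) (x ⊗ₜ[R] y) := by
            refine congrArg (fun z => x ⊗ₜ[R] z) (Subtype.ext ?_)
            push_cast [Submodule.coe_smul]
            calc ∑ i, ((d i) • (c i : K))
                = ∑ i, (y : K) * ((a i : K) * (c i : K)) := by
                  refine Finset.sum_congr rfl fun i _ => ?_
                  rw [Algebra.smul_def, hd i]; ring
              _ = (y : K) * ∑ i, ((a i : K) * (c i : K)) := by rw [← Finset.mul_sum]
              _ = (y : K) := by rw [hsum, mul_one]
  -- projectivity
  set F : ↥(I : Submodule R K) →ₗ[R] (Fin n → R) :=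
    LinearMap.pi (fun i => ρ.symm.toLinearMap ∘ₗ
      LinearMap.codRestrict _ (mulLin.flip (c i)) (fun x => hmemIJ x (c i))) with hF
  have hFval : ∀ (x : ↥(I : Submodule R K)) i,
      algebraMap R K (F x i) = (x : K) * (c i : K) := by
    intro x i
    have h1 : ρ (F x i) = ⟨(x : K) * (c i : K), hmemIJ x (c i)⟩ := by
      show ρ (ρ.symm _) = _
      rw [ρ.apply_symm_apply]
      rfl
    have := congrArg Subtype.val h1
    rwa [hρval] at this
  set G : (Fin n → R) →ₗ[R] ↥(I : Submodule R K) :=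
    ∑ i, (LinearMap.toSpanSingleton R _ (a i)) ∘ₗ (LinearMap.proj i) with hG
  have hGapp : ∀ v : Fin n → R, G v = ∑ i, v i • a i := by
    intro v
    rw [hG]
    simp [LinearMap.toSpanSingleton_apply]
  have hGF : G ∘ₗ F = LinearMap.id := by
    ext x
    show ((G (F x) : ↥(I : Submodule R K)) : K) = ((x : ↥(I : Submodule R K)) : K)
    rw [hGapp]
    push_cast [Submodule.coe_smul]
    calc ∑ i, (F x i) • (a i : K)
        = ∑ i, ((x : K) * (c i : K)) * (a i : K) := by
          refine Finset.sum_congr rfl fun i _ => ?_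
          rw [Algebra.smul_def, hFval x i]
      _ = (x : K) * ∑ i, ((a i : K) * (c i : K)) := by
          rw [Finset.mul_sum]; exact Finset.sum_congr rfl fun i _ => by ring
      _ = ((x : K)) := by rw [hsum, mul_one]
  have hProj : Module.Projective R ↥(I : Submodule R K) := Module.Projective.of_split F G hGF
  -- bijectivity of lsmul
  have hIne : I ≠ 0 := by
    rintro rfl
    rw [zero_mul] at h
    exact zero_ne_one h
  have hISne : (I : Submodule R K) ≠ ⊥ := fun hb =>
    hIne (FractionalIdeal.coeToSubmodule_eq_bot.mp hb)
  obtain ⟨x₀, hx₀mem, hx₀⟩ : ∃ x ∈ (I : Submodule R K), x ≠ 0 := by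
    by_contra hc
    push_neg at hc
    exact hISne ((Submodule.eq_bot_iff _).mpr hc)
  have hNZ : NoZeroSMulDivisors R K :=
    ⟨fun {r x} h => by
      rw [Algebra.smul_def, mul_eq_zero] at h
      exact h.imp_left (fun h' => halg (by rw [h', map_zero]))⟩
  have hBij : Function.Bijective (LinearMap.lsmul R ↥(I : Submodule R K)) := by
    constructor
    · intro r₁ r₂ hr
      have h1 : r₁ • (⟨x₀, hx₀mem⟩ : ↥(I : Submodule R K)) = r₂ • ⟨x₀, hx₀mem⟩ := by
        have := congrArg (fun φ => φ (⟨x₀, hx₀mem⟩ : ↥(I : Submodule R K))) hr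
        simpa using this
      have h2 : algebraMap R K r₁ * x₀ = algebraMap R K r₂ * x₀ := by
        have := congrArg Subtype.val h1
        simpa [Submodule.coe_smul, Algebra.smul_def] using this
      exact halg (mul_right_cancel₀ hx₀ h2)
    · intro φ
      set k₀ : K := ∑ i, (c i : K) * ((φ (a i) : ↥(I : Submodule R K)) : K) with hk₀
      have hφ : ∀ x : ↥(I : Submodule R K), ((φ x : ↥(I : Submodule R K)) : K) = k₀ * x := by
        intro x
        have hx : (G ∘ₗ F) x = x := by rw [hGF]; rfl
        have hx2 : x = ∑ i, (F x i) • a i := by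
          conv_lhs => rw [← hx]
          rw [LinearMap.comp_apply, hGapp]
        calc ((φ x : ↥(I : Submodule R K)) : K) = ((φ (∑ i, (F x i) • a i) : _) : K) := by
              rw [← hx2]
          _ = ∑ i, (F x i) • ((φ (a i) : ↥(I : Submodule R K)) : K) := by
              simp only [map_sum, map_smul, AddSubmonoidClass.coe_finset_sum, SetLike.val_smul]
          _ = ∑ i, ((x : K) * (c i : K)) * ((φ (a i) : _) : K) := by
              refine Finset.sum_congr rfl fun i _ => by rw [Algebra.smul_def, hFval x i]
          _ = k₀ * x := by
              rw [hk₀, Finset.sum_mul]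
              refine Finset.sum_congr rfl fun i _ => by ring
      have hstab : ∀ z ∈ (I : Submodule R K), k₀ • z ∈ (I : Submodule R K) := by
        intro z hz
        have := hφ ⟨z, hz⟩
        rw [smul_eq_mul]
        rw [show k₀ * z = ((φ ⟨z, hz⟩ : ↥(I : Submodule R K)) : K) from (this).symm]
        exact (φ ⟨z, hz⟩).2
      have hint : IsIntegral R k₀ :=
        isIntegral_of_smul_mem_submodule (I : Submodule R K) hISne
          (FractionalIdeal.fg_of_isNoetherianRing le_rfl I) k₀ hstab
      obtain ⟨r, hr⟩ := IsIntegrallyClosed.isIntegral_iff.mp hint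
      refine ⟨r, ?_⟩
      ext x
      calc ((LinearMap.lsmul R _ r x : ↥(I : Submodule R K)) : K)
          = algebraMap R K r * (x : K) := by
            rw [LinearMap.lsmul_apply, Submodule.coe_smul, Algebra.smul_def]
        _ = k₀ * (x : K) := by rw [hr]
        _ = ((φ x : ↥(I : Submodule R K)) : K) := (hφ x).symm
  exact ⟨hEquiv, hProj, hBij⟩

lemma aux_finite_coe (I : FractionalIdeal R⁰ K) : Module.Finite R ↥(I : Submodule R K) := by
  have hNZ : NoZeroSMulDivisors R K :=
    ⟨fun {r x} h => by
      rw [Algebra.smul_def, mul_eq_zero] at h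
      exact h.imp_left (fun h' => IsFractionRing.injective R K (by rw [h', map_zero]))⟩
  exact Module.Finite.iff_fg.mpr (FractionalIdeal.fg_of_isNoetherianRing le_rfl I)

end Dedekind

section ModuleTheory

variable {R : Type u} [CommRing R] [IsDomain R] [IsDedekindDomain R]

local notation "K" => FractionRing R

lemma aux_tensor_subsingleton (A B M : Type*) [CommSemiring A] [AddCommMonoid B]
    [AddCommMonoid M] [Module A B] [Module A M] [Subsingleton M] :
    Subsingleton (B ⊗[A] M) := by
  have hz : ∀ t : B ⊗[A] M, t = 0 := by
    intro t
    induction t with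
    | zero => rfl
    | tmul x y => rw [Subsingleton.elim y 0, tmul_zero]
    | add a b ha hb => rw [ha, hb, add_zero]
  exact ⟨fun z w => by rw [hz z, hz w]⟩

/-- A finitely generated torsion-free module of rank one over a Dedekind domain is
isomorphic to a nonzero fractional ideal. -/
lemma aux_exists_fi (N : Type u) [AddCommGroup N] [Module R N] [Module.Finite R N]
    [NoZeroSMulDivisors R N] (hrank : Module.rank K (K ⊗[R] N) = 1) :
    ∃ I : FractionalIdeal R⁰ K, I ≠ 0 ∧ Nonempty (N ≃ₗ[R] ↥(I : Submodule R K)) := by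
  haveI : Module.Finite K (K ⊗[R] N) := Module.Finite.base_change R K N
  have hfr : Module.finrank K (K ⊗[R] N) = 1 :=
    Module.finrank_eq_of_rank_eq (by rw [hrank, Nat.cast_one])
  let b : Module.Basis (Fin 1) K (K ⊗[R] N) := Module.finBasisOfFinrankEq K _ hfr
  let e1 : (K ⊗[R] N) ≃ₗ[K] K := b.equivFun.trans (LinearEquiv.funUnique (Fin 1) K K)
  let f : N →ₗ[R] K ⊗[R] N := TensorProduct.mk R K N 1
  haveI hloc : IsLocalizedModule R⁰ f :=
    (isLocalizedModule_iff_isBaseChange R⁰ K f).mpr (TensorProduct.isBaseChange R N K)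
  have hfinj : Function.Injective f := by
    intro x y hxy
    obtain ⟨c, hc⟩ := hloc.exists_of_eq hxy
    have h1 : (c : R) • (x - y) = 0 := by
      rw [smul_sub]
      rw [show (c : R) • x = c • x from rfl, show (c : R) • y = c • y from rfl]
      rw [hc, sub_self]
    rcases smul_eq_zero.mp h1 with h | h
    · exact absurd h (nonZeroDivisors.coe_ne_zero c)
    · exact sub_eq_zero.mp h
  let ψ : N →ₗ[R] K := (e1.restrictScalars R).toLinearMap ∘ₗ f
  have hψinj : Function.Injective ψ := (e1.restrictScalars R).injective.comp hfinj
  have hfg : (LinearMap.range ψ).FG := by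
    rw [LinearMap.range_eq_map]
    exact Submodule.FG.map _ (Module.finite_def.mp ‹Module.Finite R N›)
  refine ⟨⟨LinearMap.range ψ, FractionalIdeal.isFractional_of_fg hfg⟩, ?_,
    ⟨LinearEquiv.ofInjective ψ hψinj⟩⟩
  intro h0
  have hbot : LinearMap.range ψ = ⊥ := by
    have := congrArg (FractionalIdeal.coeToSubmodule) h0
    rwa [FractionalIdeal.coe_zero] at this
  have hnontriv : Nontrivial N := by
    rcases subsingleton_or_nontrivial N with hs | hn
    · haveI := aux_tensor_subsingleton R K N
      rw [rank_subsingleton' K (K ⊗[R] N)] at hrank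
      exact absurd hrank zero_ne_one
    · exact hn
  obtain ⟨x, hx⟩ := exists_ne (0 : N)
  have : ψ x = 0 := by
    have := LinearMap.mem_range_self ψ x
    rwa [hbot, Submodule.mem_bot] at this
  exact hx (hψinj (by rw [this, map_zero]))

lemma aux_invertible (N : Type u) [AddCommGroup N] [Module R N] [Module.Finite R N]
    [NoZeroSMulDivisors R N] (hrank : Module.rank K (K ⊗[R] N) = 1) :
    IsInvertibleModule R N := by
  obtain ⟨I, hI, ⟨e⟩⟩ := aux_exists_fi N hrank
  have h1 : I * I⁻¹ = 1 := mul_inv_cancel₀ hI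
  obtain ⟨⟨et⟩, -, -⟩ := aux_main h1
  exact ⟨‹_›, ↥((I⁻¹ : FractionalIdeal R⁰ K) : Submodule R K), inferInstance, inferInstance,
    aux_finite_coe _, ⟨(TensorProduct.congr e (LinearEquiv.refl R _)).trans et⟩⟩

lemma aux_projective (N : Type u) [AddCommGroup N] [Module R N] [Module.Finite R N]
    [NoZeroSMulDivisors R N] (hrank : Module.rank K (K ⊗[R] N) = 1) :
    Module.Projective R N := by
  obtain ⟨I, hI, ⟨e⟩⟩ := aux_exists_fi N hrank
  obtain ⟨-, hp, -⟩ := aux_main (mul_inv_cancel₀ hI)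
  exact hp.of_equiv e.symm

lemma aux_lsmulbij (N : Type u) [AddCommGroup N] [Module R N] [Module.Finite R N]
    [NoZeroSMulDivisors R N] (hrank : Module.rank K (K ⊗[R] N) = 1) :
    Function.Bijective (LinearMap.lsmul R N) := by
  obtain ⟨I, hI, ⟨e⟩⟩ := aux_exists_fi N hrank
  obtain ⟨-, -, hb⟩ := aux_main (mul_inv_cancel₀ hI)
  exact aux_lsmul_congr e hb

/-- An invertible module has rank one. -/
lemma aux_rank_inv {a b : Type u} [AddCommGroup a] [Module R a] [AddCommGroup b] [Module R b]
    [Module.Finite R a] [Module.Finite R b] (e : (a ⊗[R] b) ≃ₗ[R] R) :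
    Module.rank K (K ⊗[R] a) = 1 := by
  haveI := Module.Finite.base_change R K a
  haveI := Module.Finite.base_change R K b
  let e2 := TensorProduct.AlgebraTensorModule.distribBaseChange R K a b
  let e3 : (K ⊗[R] (a ⊗[R] b)) ≃ₗ[K] (K ⊗[R] R) :=
    TensorProduct.AlgebraTensorModule.congr (LinearEquiv.refl K K) e
  let e4 : (K ⊗[R] R) ≃ₗ[K] K := TensorProduct.AlgebraTensorModule.rid R K K
  have h1 : Module.finrank K ((K ⊗[R] a) ⊗[K] (K ⊗[R] b)) = 1 :=
    (e2.symm.trans (e3.trans e4)).finrank_eq.trans (Module.finrank_self K)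
  rw [Module.finrank_tensorProduct] at h1
  have h2 : Module.finrank K (K ⊗[R] a) = 1 :=
    Nat.dvd_one.mp ⟨Module.finrank K (K ⊗[R] b), h1.symm⟩
  rw [← Module.finrank_eq_rank K (K ⊗[R] a), h2, Nat.cast_one]

/-- An invertible module is torsion-free. -/
lemma aux_nzsd_inv {a b : Type u} [AddCommGroup a] [Module R a] [AddCommGroup b] [Module R b]
    (e : (a ⊗[R] b) ≃ₗ[R] R) : NoZeroSMulDivisors R a := by
  refine ⟨fun {r} {x} hrx => ?_⟩
  by_cases hr : r = 0
  · exact Or.inl hr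
  right
  have step1 : ∀ y : b, x ⊗ₜ[R] y = (0 : a ⊗[R] b) := by
    intro y
    have h1 : r • (x ⊗ₜ[R] y) = 0 := by
      rw [TensorProduct.smul_tmul', hrx, TensorProduct.zero_tmul]
    have h2 : r • e (x ⊗ₜ[R] y) = 0 := by rw [← map_smul, h1, map_zero]
    have h3 : e (x ⊗ₜ[R] y) = 0 := by
      rcases smul_eq_zero.mp h2 with h | h
      exacts [absurd h hr, h]
    exact e.injective (by rw [h3, map_zero])
  let e' : (b ⊗[R] a) ≃ₗ[R] R := (TensorProduct.comm R b a).trans e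
  obtain ⟨S, hS⟩ := TensorProduct.exists_finset (e'.symm 1)
  have hxt : x ⊗ₜ[R] (e'.symm 1) = (0 : a ⊗[R] (b ⊗[R] a)) := by
    rw [hS, TensorProduct.tmul_sum]
    refine Finset.sum_eq_zero fun p _ => ?_
    rw [← TensorProduct.assoc_tmul, step1 p.1, TensorProduct.zero_tmul, map_zero]
  have h5 : x ⊗ₜ[R] (1 : R) = (0 : a ⊗[R] R) := by
    have := congrArg (TensorProduct.congr (LinearEquiv.refl R a) e') hxt
    simpa using this
  have h6 := congrArg (TensorProduct.rid R a) h5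
  simpa using h6

end ModuleTheory

section SemidualizingTheory

variable {R : Type u} [CommRing R] [IsDomain R] [IsDedekindDomain R]

local notation "K" => FractionRing R

lemma aux_sd_of_inv {N : Type u} [AddCommGroup N] [Module R N]
    (hN : IsInvertibleModule R N) : IsSemidualizing R N := by
  obtain ⟨hfin, b, hb1, hb2, hbfin, ⟨e⟩⟩ := hN
  haveI := hfin; haveI := hbfin
  haveI htf : NoZeroSMulDivisors R N := aux_nzsd_inv e
  have hrank := aux_rank_inv e
  haveI hproj : Module.Projective R N := aux_projective N hrank
  exact ⟨hfin, aux_lsmulbij N hrank, fun i hi => aux_subsingleton_ext N i hi⟩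

lemma aux_rank_one_of_lsmul (N : Type u) [AddCommGroup N] [Module R N] [Module.Finite R N]
    (hbij : Function.Bijective (LinearMap.lsmul R N)) :
    Module.rank K (K ⊗[R] N) = 1 := by
  haveI : Module.FinitePresentation R N := Module.finitePresentation_of_finite R N
  let f : N →ₗ[R] K ⊗[R] N := TensorProduct.mk R K N 1
  haveI hf : IsLocalizedModule R⁰ f :=
    (isLocalizedModule_iff_isBaseChange R⁰ K f).mpr (TensorProduct.isBaseChange R N K)
  let g := IsLocalizedModule.mapExtendScalars R⁰ f f K
  haveI hg : IsLocalizedModule R⁰ g :=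
    Module.FinitePresentation.isLocalizedModule_mapExtendScalars R⁰ f f K
  let els : R ≃ₗ[R] (N →ₗ[R] N) := LinearEquiv.ofBijective (LinearMap.lsmul R N) hbij
  haveI : IsLocalizedModule R⁰ (g ∘ₗ els.toLinearMap) :=
    IsLocalizedModule.of_linearEquiv_right R⁰ g els
  let eq1 : ((K ⊗[R] N) →ₗ[K] (K ⊗[R] N)) ≃ₗ[R] K :=
    (IsLocalizedModule.iso R⁰ (g ∘ₗ els.toLinearMap)).symm.trans
      (IsLocalizedModule.iso R⁰ (Algebra.linearMap R K))
  haveI : Module.Finite K (K ⊗[R] N) := Module.Finite.base_change R K N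
  have h1 : Module.finrank K ((K ⊗[R] N) →ₗ[K] (K ⊗[R] N)) = 1 := by
    have e2 := aux_extendEquiv R⁰ K (M := (K ⊗[R] N) →ₗ[K] (K ⊗[R] N)) (N := K) eq1
    exact e2.finrank_eq.trans (Module.finrank_self K)
  rw [Module.finrank_linearMap] at h1
  have h2 : Module.finrank K (K ⊗[R] N) = 1 := Nat.dvd_one.mp ⟨_, h1.symm⟩
  rw [← Module.finrank_eq_rank K (K ⊗[R] N), h2, Nat.cast_one]

lemma aux_nzsd_of_lsmul (N : Type u) [AddCommGroup N] [Module R N] [Module.Finite R N]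
    (hbij : Function.Bijective (LinearMap.lsmul R N))
    (hrank : Module.rank K (K ⊗[R] N) = 1) : NoZeroSMulDivisors R N := by
  set T := Submodule.torsion R N with hT
  haveI : Module.Finite R (N ⧸ T) := Module.Finite.quotient R T
  haveI tfQ : NoZeroSMulDivisors R (N ⧸ T) :=
    noZeroSMulDivisors_iff_right_eq_zero_of_smul.mpr fun r hr m h => by
      have hm : m ∈ Submodule.torsion R (N ⧸ T) :=
        (Submodule.mem_torsion_iff _).mpr ⟨⟨r, mem_nonZeroDivisors_of_ne_zero hr⟩, h⟩
      rwa [Submodule.QuotientTorsion.torsion_eq_bot, Submodule.mem_bot] at hm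
  let fN : N →ₗ[R] K ⊗[R] N := TensorProduct.mk R K N 1
  haveI hfN : IsLocalizedModule R⁰ fN :=
    (isLocalizedModule_iff_isBaseChange R⁰ K fN).mpr (TensorProduct.isBaseChange R N K)
  let fQ : (N ⧸ T) →ₗ[R] K ⊗[R] (N ⧸ T) := TensorProduct.mk R K (N ⧸ T) 1
  haveI hfQ : IsLocalizedModule R⁰ fQ :=
    (isLocalizedModule_iff_isBaseChange R⁰ K fQ).mpr (TensorProduct.isBaseChange R (N ⧸ T) K)
  let fc : N →ₗ[R] K ⊗[R] (N ⧸ T) := fQ ∘ₗ T.mkQ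
  haveI hlocQ : IsLocalizedModule R⁰ fc := by
    constructor
    · exact fun s => hfQ.map_units s
    · intro y
      obtain ⟨⟨q, s⟩, hq⟩ := IsLocalizedModule.surj R⁰ fQ y
      obtain ⟨x, rfl⟩ := T.mkQ_surjective q
      exact ⟨⟨x, s⟩, hq⟩
    · intro x₁ x₂ hx
      obtain ⟨c, hc⟩ := hfQ.exists_of_eq (x₁ := T.mkQ x₁) (x₂ := T.mkQ x₂) hx
      have h1 : T.mkQ ((c : R) • x₁ - (c : R) • x₂) = 0 := by
        rw [map_sub, map_smul, map_smul]
        rw [show (c : R) • T.mkQ x₁ = c • T.mkQ x₁ from rfl,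
          show (c : R) • T.mkQ x₂ = c • T.mkQ x₂ from rfl, hc, sub_self]
      have h2 : (c : R) • x₁ - (c : R) • x₂ ∈ T := by
        rwa [← Submodule.Quotient.mk_eq_zero, ← Submodule.mkQ_apply]
      obtain ⟨c', hc'⟩ := (Submodule.mem_torsion_iff _).mp h2
      refine ⟨c' * c, ?_⟩
      have h3 : (c' * c) • x₁ - (c' * c) • x₂ = 0 := by
        have : ((c' : R) * (c : R)) • x₁ - ((c' : R) * (c : R)) • x₂ = 0 := by
          rw [mul_smul, mul_smul, ← smul_sub]
          exact hc'
        exact this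
      have := sub_eq_zero.mp h3
      exact this
  let eNQ : (K ⊗[R] N) ≃ₗ[R] (K ⊗[R] (N ⧸ T)) :=
    (IsLocalizedModule.iso R⁰ fN).symm.trans (IsLocalizedModule.iso R⁰ fc)
  let eNQ' : (K ⊗[R] N) ≃ₗ[K] (K ⊗[R] (N ⧸ T)) := aux_extendEquiv R⁰ K eNQ
  have hrankQ : Module.rank K (K ⊗[R] (N ⧸ T)) = 1 := by
    rw [← eNQ'.rank_eq]; exact hrank
  haveI hQproj : Module.Projective R (N ⧸ T) := aux_projective (N ⧸ T) hrankQ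
  obtain ⟨s, hs⟩ := Module.projective_lifting_property T.mkQ LinearMap.id (T.mkQ_surjective)
  obtain ⟨d, hd⟩ := hbij.2 (s ∘ₗ T.mkQ)
  have hdz : ∀ z : N, d • z = s (T.mkQ z) := by
    intro z
    have := LinearMap.congr_fun hd z
    simpa using this
  have hdd : d * d = d := by
    apply hbij.1
    ext x
    show (d * d) • x = d • x
    calc (d * d) • x = d • (d • x) := mul_smul d d x
      _ = s (T.mkQ (s (T.mkQ x))) := by rw [hdz x, hdz]
      _ = s (LinearMap.id (T.mkQ x)) := by
          rw [show T.mkQ (s (T.mkQ x)) = (T.mkQ ∘ₗ s) (T.mkQ x) from rfl, hs]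
      _ = d • x := by rw [LinearMap.id_apply, ← hdz]
  have hd01 : d = 0 ∨ d = 1 := by
    have h2 : d * (d - 1) = 0 := by rw [mul_sub, hdd, mul_one, sub_self]
    rcases mul_eq_zero.mp h2 with h | h
    · exact Or.inl h
    · exact Or.inr (by rw [sub_eq_zero] at h; exact h)
  rcases hd01 with rfl | rfl
  · exfalso
    have hQ0 : ∀ q : N ⧸ T, q = 0 := by
      intro q
      obtain ⟨x, rfl⟩ := T.mkQ_surjective q
      have h1 : s (T.mkQ x) = 0 := by rw [← hdz x, zero_smul]
      calc T.mkQ x = T.mkQ (s (T.mkQ x)) := (LinearMap.congr_fun hs (T.mkQ x)).symm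
        _ = T.mkQ 0 := by rw [h1]
        _ = 0 := map_zero _
    haveI : Subsingleton (N ⧸ T) := ⟨fun a b => by rw [hQ0 a, hQ0 b]⟩
    haveI := aux_tensor_subsingleton R K (N ⧸ T)
    rw [rank_subsingleton' K (K ⊗[R] (N ⧸ T))] at hrankQ
    exact zero_ne_one hrankQ
  · have hT0 : T = ⊥ := by
      rw [Submodule.eq_bot_iff]
      intro x hx
      have h1 : s (T.mkQ x) = x := by rw [← hdz x, one_smul]
      have h2 : T.mkQ x = 0 := by
        rw [Submodule.mkQ_apply, Submodule.Quotient.mk_eq_zero]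
        exact hx
      rw [h2, map_zero] at h1
      exact h1.symm
    exact noZeroSMulDivisors_iff_right_eq_zero_of_smul.mpr fun r hr m h => by
        have hm : m ∈ T :=
          (Submodule.mem_torsion_iff _).mpr ⟨⟨r, mem_nonZeroDivisors_of_ne_zero hr⟩, h⟩
        rwa [hT0, Submodule.mem_bot] at hm

lemma aux_inv_of_sd {N : Type u} [AddCommGroup N] [Module R N]
    (hN : IsSemidualizing R N) : IsInvertibleModule R N := by
  obtain ⟨hfin, hbij, -⟩ := hN
  haveI := hfin
  have hrank := aux_rank_one_of_lsmul N hbij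
  haveI := aux_nzsd_of_lsmul N hbij hrank
  exact aux_invertible N hrank

/-- Over a domain, a reflexive module is torsion-free. -/
lemma aux_nzsd_of_reflexive (N : Type u) [AddCommGroup N] [Module R N]
    [Module.IsReflexive R N] : NoZeroSMulDivisors R N := by
  refine ⟨fun {r} {x} hrx => ?_⟩
  by_cases hr : r = 0
  · exact Or.inl hr
  right
  have h1 : Module.Dual.eval R N x = 0 := by
    ext φ
    have h2 : r * φ x = 0 := by rw [← smul_eq_mul, ← map_smul, hrx, map_zero]
    have h3 : φ x = 0 := by
      rcases mul_eq_zero.mp h2 with h | h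
      exacts [absurd h hr, h]
    simpa using h3
  have h4 : Module.Dual.eval R N x = Module.Dual.eval R N 0 := by rw [h1, map_zero]
  exact (Module.bijective_dual_eval R N).injective h4

end SemidualizingTheory

lemma aux_rank_baseChange {S : Type u} [CommRing S] [IsDomain S] (M : Type u)
    [AddCommGroup M] [Module S M] [Module.Free S M] :
    Module.rank (FractionRing S) (FractionRing S ⊗[S] M) = Cardinal.lift.{u} (Module.rank S M) :=
  Module.rank_baseChange

theorem statement7 (D : Type u) [CommRing D] [IsDomain D] [IsDedekindDomain D] :
    -- Pic(D) = Cl(D) = 𝔖₀(D) :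
    (∀ (N : Type u) [AddCommGroup N] [Module D N],
      (IsSemidualizing D N ↔ IsInvertibleModule D N) ∧
      (IsInvertibleModule D N ↔
        (Module.Finite D N ∧ Module.IsReflexive D N ∧
          Module.rank (FractionRing D) (FractionRing D ⊗[D] N) = 1))) ∧
    -- nontrivial Pic gives a non-free semidualizing module :
    ((∃ (a : Type u) (_ : AddCommGroup a) (_ : Module D a),
        IsInvertibleModule D a ∧ ¬ Nonempty (a ≃ₗ[D] D)) →
      (∃ (C : Type u) (_ : AddCommGroup C) (_ : Module D C),
        IsSemidualizing D C ∧ ¬ Nonempty (C ≃ₗ[D] D))) ∧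
    -- local Dedekind domains have only the free semidualizing module :
    (∀ (m : Ideal D) (hm : m.IsMaximal),
      letI := hm.isPrime
      ∀ (C : Type u) [AddCommGroup C] [Module (Localization.AtPrime m) C],
        IsSemidualizing (Localization.AtPrime m) C →
          Nonempty (C ≃ₗ[Localization.AtPrime m] Localization.AtPrime m)) := by
  refine ⟨?_, ?_, ?_⟩
  · intro N _ _
    refine ⟨⟨aux_inv_of_sd, aux_sd_of_inv⟩, ?_, ?_⟩
    · rintro ⟨hfin, b, _, _, hbfin, ⟨e⟩⟩
      haveI := hfin; haveI := hbfin
      haveI := aux_nzsd_inv e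
      have hrank := aux_rank_inv e
      haveI := aux_projective N hrank
      exact ⟨hfin, inferInstance, hrank⟩
    · rintro ⟨hfin, hrefl, hrank⟩
      haveI := hfin; haveI := hrefl
      haveI := aux_nzsd_of_reflexive (R := D) N
      exact aux_invertible N hrank
  · rintro ⟨a, ha1, ha2, hinva, hnf⟩
    exact ⟨a, ha1, ha2, aux_sd_of_inv hinva, hnf⟩
  · intro m hm
    haveI := hm.isPrime
    intro C _ _ hC
    obtain ⟨hfin, b, _, _, hbfin, ⟨e⟩⟩ := aux_inv_of_sd hC
    haveI := hfin; haveI := hbfin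
    haveI := aux_nzsd_inv e
    have hrank := aux_rank_inv e
    haveI hproj := aux_projective C hrank
    haveI : Module.FinitePresentation (Localization.AtPrime m) C :=
      Module.finitePresentation_of_finite _ _
    haveI hfree : Module.Free (Localization.AtPrime m) C := Module.free_of_flat_of_isLocalRing
    have hr : Module.rank (Localization.AtPrime m) C = 1 := by
      have hb := aux_rank_baseChange (S := Localization.AtPrime m) C
      have := hb.symm.trans hrank
      rwa [show (1 : Cardinal.{u}) = Cardinal.lift.{u} (1 : Cardinal.{u}) from
        (Cardinal.lift_one).symm, Cardinal.lift_inj] at this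
    have hfr : Module.finrank (Localization.AtPrime m) C = 1 :=
      Module.finrank_eq_of_rank_eq (by rw [hr, Nat.cast_one])
    let bC := Module.finBasisOfFinrankEq (Localization.AtPrime m) C hfr
    exact ⟨bC.equivFun.trans (LinearEquiv.funUnique (Fin 1) _ _)⟩
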